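/- Let G be a finite simple graph with vertices u_1,…,u_n, e = |E(G)| edges, and minimum degree at least 1, and let s_i = Σ_{k=1}^{i} d_G(u_k) (so s_0 = 0 and s_n = 2e). Define the graph H with vertex set X_0 ∪ X_1 ∪ X_2 ∪ X_3 ∪ X_4 ∪ X_5 ∪ X_6, where X_0 = {g_1,g_2}, X_1 = {a_1,…,a_{2e+1}}, X_2 = {b_1,…,b_{2e+1}}, X_3 = {c_1,…,c_{2e}}, X_4 = {w_1,…,w_n}, X_5 = {v_1,…,v_n}, X_6 = {d_1,…,d_{2e}}, and edge set consisting of: g_1 a_i for 1 ≤ i ≤ 2e+1; g_2 b_i for 1 ≤ i ≤ 2e+1; g_1 c_i and g_2 c_i for 1 ≤ i ≤ 2e; w_i c_j for 1 ≤ i ≤ n and s_{i−1} < j ≤ s_i; v_i w_j whenever u_i u_j ∈ E(G) or i = j; and v_i d_j for 1 ≤ i ≤ n and s_{i−1} < j ≤ s_i. Then, under the strict majority threshold, NPPTS(H) = 2e + n + 4 + γ(G), where γ(G) is the domination number of G. -/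

import Mathlib

/-! Non-progressive spread of influence under the strict majority threshold. -/

/-- The degree `d(v)` of a vertex: the number of its neighbors. -/
noncomputable def vdeg {V : Type*} (G : SimpleGraph V) (v : V) : ℕ :=
  {u | G.Adj v u}.ncard

/-- The strict majority threshold `t(v) = ⌈(d(v)+1)/2⌉`. -/
noncomputable def vthr {V : Type*} (G : SimpleGraph V) (v : V) : ℕ :=
  (vdeg G v + 2) / 2

/-- The number of neighbors of `v` that are currently infected under `f`. -/
noncomputable def infNbrs {V : Type*} (G : SimpleGraph V) (f : V → Prop) (v : V) : ℕ :=
  {u | G.Adj v u ∧ f u}.ncard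

/-- The state `f_τ` of the non-progressive strict majority process started at `f0`:
`f_τ(v) = 1` iff at least `t(v)` neighbors of `v` were infected at time `τ - 1`. -/
def stateAt {V : Type*} (G : SimpleGraph V) (f0 : V → Prop) : ℕ → V → Prop
  | 0 => f0
  | τ + 1 => fun v => vthr G v ≤ infNbrs G (stateAt G f0 τ) v

/-- `f0` is a perfect target set: at some finite time every vertex is infected. -/
def IsPTS {V : Type*} (G : SimpleGraph V) (f0 : V → Prop) : Prop :=
  ∃ τ : ℕ, ∀ v, stateAt G f0 τ v

/-- The cost of an initial assignment: the number of initially infected vertices. -/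
noncomputable def ptsCost {V : Type*} (f0 : V → Prop) : ℕ :=
  {v | f0 v}.ncard

/-- `NPPTS G`: the minimum cost of a perfect target set of `G` (non-progressive model). -/
noncomputable def NPPTS {V : Type*} (G : SimpleGraph V) : ℕ :=
  sInf {c | ∃ f0 : V → Prop, IsPTS G f0 ∧ ptsCost f0 = c}

/-- The domination number `γ(G)`: the minimum cardinality of a set `D` of vertices such
that every vertex not in `D` has a neighbor in `D`. -/
noncomputable def domNum {V : Type*} (G : SimpleGraph V) : ℕ :=
  sInf {k | ∃ D : Set V, (∀ v, v ∉ D → ∃ u ∈ D, G.Adj u v) ∧ D.ncard = k}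

/-- The vertex set of the gadget graph `H`:
`X₀ = {g₁, g₂}`, `X₁ = {a_i}`, `X₂ = {b_i}` (each of size `2e+1`), `X₃ = {c_i}`,
`X₆ = {d_i}` (each of size `2e`), and `X₄ = {w_i}`, `X₅ = {v_i}` (each of size `n`). -/
inductive HVert (n e : ℕ) : Type
  | g1 : HVert n e
  | g2 : HVert n e
  | a : Fin (2 * e + 1) → HVert n e
  | b : Fin (2 * e + 1) → HVert n e
  | c : Fin (2 * e) → HVert n e
  | w : Fin n → HVert n e
  | v : Fin n → HVert n e
  | d : Fin (2 * e) → HVert n e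

/-- `psum G i = s_i = Σ_{k=1}^{i} d(u_k)`, the partial sums of the degree sequence of
`G` (so `psum G 0 = 0` and `psum G n = 2e`). -/
noncomputable def psum {n : ℕ} (G : SimpleGraph (Fin n)) (i : ℕ) : ℕ :=
  ∑ k ∈ Finset.range i, if h : k < n then vdeg G ⟨k, h⟩ else 0

/-- The (oriented) edge relation of the gadget graph `H`; 0-based indices `j : Fin (2e)`
correspond to the 1-based index `j+1`, so `s_{i−1} < j+1 ≤ s_i` reads
`s_{i-1} ≤ j < s_i`. -/
def hrel {n e : ℕ} (G : SimpleGraph (Fin n)) : HVert n e → HVert n e → Prop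
  | .g1, .a _ => True
  | .g2, .b _ => True
  | .g1, .c _ => True
  | .g2, .c _ => True
  | .w i, .c j => psum G i.val ≤ j.val ∧ j.val < psum G (i.val + 1)
  | .v i, .w j => G.Adj i j ∨ i = j
  | .v i, .d j => psum G i.val ≤ j.val ∧ j.val < psum G (i.val + 1)
  | _, _ => False

/-- The gadget graph `H` built from `G`: edges `g₁a_i`, `g₂b_i` (`1 ≤ i ≤ 2e+1`),
`g₁c_i`, `g₂c_i` (`1 ≤ i ≤ 2e`), `w_i c_j` and `v_i d_j` (`s_{i−1} < j ≤ s_i`), and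
`v_i w_j` whenever `u_i u_j ∈ E(G)` or `i = j`. -/
def Hgraph {n e : ℕ} (G : SimpleGraph (Fin n)) : SimpleGraph (HVert n e) where
  Adj x y := hrel G x y ∨ hrel G y x
  symm := ⟨fun _ _ h => Or.symm h⟩
  loopless := ⟨by
    intro x h
    rcases h with h | h <;> cases x <;> exact h⟩

section Dev
open Classical
variable {n e : ℕ} (G : SimpleGraph (Fin n))

private def HVert.toSum : HVert n e → (Fin 2 ⊕ Fin (2*e+1) ⊕ Fin (2*e+1) ⊕ Fin (2*e) ⊕ Fin n ⊕ Fin n ⊕ Fin (2*e))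
  | .g1 => .inl 0
  | .g2 => .inl 1
  | .a i => .inr (.inl i)
  | .b i => .inr (.inr (.inl i))
  | .c j => .inr (.inr (.inr (.inl j)))
  | .w i => .inr (.inr (.inr (.inr (.inl i))))
  | .v i => .inr (.inr (.inr (.inr (.inr (.inl i)))))
  | .d j => .inr (.inr (.inr (.inr (.inr (.inr j)))))

instance : Finite (HVert n e) := by
  apply Finite.of_injective (HVert.toSum (n := n) (e := e))
  intro x y h
  cases x <;> cases y <;> simp_all [HVert.toSum] <;> omega

/-- ncard of a setOf over a fintype as a filter card. -/
lemma ncard_setOf {α : Type*} [Fintype α] (P : α → Prop) :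
    {x | P x}.ncard = (Finset.univ.filter P).card := by
  classical
  rw [Set.ncard_eq_toFinset_card']
  congr 1
  ext x
  simp

end Dev

section Dev2
open Classical
variable {n e : ℕ} (G : SimpleGraph (Fin n))

lemma psum_zero : psum G 0 = 0 := by simp [psum]

lemma psum_succ {i : ℕ} (h : i < n) :
    psum G (i + 1) = psum G i + vdeg G ⟨i, h⟩ := by
  simp [psum, Finset.sum_range_succ, h]

lemma psum_mono : Monotone (psum G) := by
  intro i j hij
  exact Finset.sum_le_sum_of_subset (Finset.range_subset_range.2 hij)

lemma psum_top (he : G.edgeSet.ncard = e) : psum G n = 2 * e := by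
  classical
  have hdeg : ∀ v : Fin n, vdeg G v = G.degree v := by
    intro v
    rw [vdeg, SimpleGraph.degree, ← Set.ncard_coe_finset]
    congr 1
    ext u
    simp [SimpleGraph.mem_neighborFinset]
  have hsum := SimpleGraph.sum_degrees_eq_twice_card_edges G
  have hcard : G.edgeFinset.card = e := by
    rw [← Set.ncard_coe_finset, SimpleGraph.coe_edgeFinset, he]
  have : psum G n = ∑ v : Fin n, G.degree v := by
    rw [psum, ← Fin.sum_univ_eq_sum_range (fun k => if h : k < n then vdeg G ⟨k, h⟩ else 0) n]
    apply Finset.sum_congr rfl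
    intro x _
    simp [x.isLt, hdeg]
  rw [this, hsum, hcard]

lemma exists_interval {j m : ℕ} (hj : j < psum G m) :
    ∃ i, i < m ∧ psum G i ≤ j ∧ j < psum G (i + 1) := by
  induction m with
  | zero => simp [psum_zero] at hj
  | succ m ih =>
    by_cases h : j < psum G m
    · obtain ⟨i, h1, h2, h3⟩ := ih h
      exact ⟨i, Nat.lt_succ_of_lt h1, h2, h3⟩
    · exact ⟨m, Nat.lt_succ_self m, Nat.le_of_not_lt h, hj⟩

lemma interval_unique {i i' j : ℕ}
    (h1 : psum G i ≤ j) (h2 : j < psum G (i + 1))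
    (h1' : psum G i' ≤ j) (h2' : j < psum G (i' + 1)) : i = i' := by
  by_contra hne
  rcases Nat.lt_or_ge i i' with h | h
  · exact absurd (le_trans (psum_mono G h) h1') (not_le.2 h2)
  · rcases Nat.lt_or_ge i' i with h' | h'
    · exact absurd (le_trans (psum_mono G h') h1) (not_le.2 h2')
    · omega

/-- card of a Fin-interval. -/
lemma ncard_fin_interval {m a b : ℕ} (hb : b ≤ m) :
    {j : Fin m | a ≤ j.val ∧ j.val < b}.ncard = b - a := by
  have himg : Fin.val '' {j : Fin m | a ≤ j.val ∧ j.val < b} = Set.Ico a b := by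
    ext x
    constructor
    · rintro ⟨j, ⟨hj1, hj2⟩, rfl⟩; exact ⟨hj1, hj2⟩
    · rintro ⟨hx1, hx2⟩
      exact ⟨⟨x, lt_of_lt_of_le hx2 hb⟩, ⟨hx1, hx2⟩, rfl⟩
  have := Set.ncard_image_of_injective {j : Fin m | a ≤ j.val ∧ j.val < b}
    (Fin.val_injective)
  rw [himg] at this
  rw [← this, ← Finset.coe_Ico, Set.ncard_coe_finset, Nat.card_Ico]

end Dev2

section Dev3
open Classical
variable {n e : ℕ} (G : SimpleGraph (Fin n))

/-- interval membership: `d_j`/`c_j` attached to `w_i`/`v_i`. -/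
def Ivl (i : Fin n) (j : Fin (2*e)) : Prop :=
  psum G i.val ≤ j.val ∧ j.val < psum G (i.val + 1)

/-- closed neighborhood relation in `G`. -/
def Nbr (i k : Fin n) : Prop := G.Adj i k ∨ i = k

lemma nbr_comm {i k : Fin n} : Nbr G i k ↔ Nbr G k i := by
  unfold Nbr
  rw [G.adj_comm]
  tauto

lemma nbr_refl (i : Fin n) : Nbr G i i := Or.inr rfl

lemma ncard_union_images {α β γ : Type*} [Finite γ] (f : α → γ) (g : β → γ)
    (hf : Function.Injective f) (hg : Function.Injective g)
    (hfg : ∀ a b, f a ≠ g b) (s : Set α) (t : Set β) :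
    (f '' s ∪ g '' t).ncard = s.ncard + t.ncard := by
  rw [Set.ncard_union_eq ?_ (Set.toFinite _) (Set.toFinite _),
    Set.ncard_image_of_injective _ hf, Set.ncard_image_of_injective _ hg]
  rw [Set.disjoint_left]
  rintro x ⟨a, _, rfl⟩ ⟨b, _, hb⟩
  exact hfg a b hb.symm

variable (f : HVert n e → Prop)

lemma adjset_a (i : Fin (2*e+1)) :
    {u | (Hgraph G).Adj (.a i) u ∧ f u} = {u : HVert n e | u = .g1 ∧ f .g1} := by
  ext u
  cases u <;> simp [Hgraph, hrel]

lemma adjset_b (i : Fin (2*e+1)) :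
    {u | (Hgraph G).Adj (.b i) u ∧ f u} = {u : HVert n e | u = .g2 ∧ f .g2} := by
  ext u
  cases u <;> simp [Hgraph, hrel]

lemma infNbrs_a_iff (i : Fin (2*e+1)) :
    0 < infNbrs (Hgraph G) f (.a i) ↔ f .g1 := by
  rw [infNbrs, adjset_a]
  constructor
  · intro h
    obtain ⟨u, hu⟩ := (Set.ncard_pos (Set.toFinite _)).mp h
    exact hu.2
  · intro h
    exact (Set.ncard_pos (Set.toFinite _)).mpr ⟨.g1, rfl, h⟩

lemma infNbrs_b_iff (i : Fin (2*e+1)) :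
    0 < infNbrs (Hgraph G) f (.b i) ↔ f .g2 := by
  rw [infNbrs, adjset_b]
  constructor
  · intro h
    obtain ⟨u, hu⟩ := (Set.ncard_pos (Set.toFinite _)).mp h
    exact hu.2
  · intro h
    exact (Set.ncard_pos (Set.toFinite _)).mpr ⟨.g2, rfl, h⟩

lemma infNbrs_g1 :
    infNbrs (Hgraph G) f .g1
      = {i | f (.a i)}.ncard + {j | f (.c j)}.ncard := by
  rw [infNbrs]
  have hset : {u | (Hgraph G).Adj .g1 u ∧ f u}
      = HVert.a '' {i | f (.a i)} ∪ HVert.c '' {j | f (.c j)} := by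
    ext u
    cases u <;> simp [Hgraph, hrel]
  rw [hset]
  exact ncard_union_images _ _ (fun _ _ h => by injection h)
    (fun _ _ h => by injection h) (fun _ _ h => by injection h) _ _

lemma infNbrs_g2 :
    infNbrs (Hgraph G) f .g2
      = {i | f (.b i)}.ncard + {j | f (.c j)}.ncard := by
  rw [infNbrs]
  have hset : {u | (Hgraph G).Adj .g2 u ∧ f u}
      = HVert.b '' {i | f (.b i)} ∪ HVert.c '' {j | f (.c j)} := by
    ext u
    cases u <;> simp [Hgraph, hrel]
  rw [hset]
  exact ncard_union_images _ _ (fun _ _ h => by injection h)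
    (fun _ _ h => by injection h) (fun _ _ h => by injection h) _ _

lemma infNbrs_w (i : Fin n) :
    infNbrs (Hgraph G) f (.w i)
      = {j | Ivl G i j ∧ f (.c j)}.ncard + {k | Nbr G i k ∧ f (.v k)}.ncard := by
  rw [infNbrs]
  have hset : {u | (Hgraph G).Adj (.w i) u ∧ f u}
      = HVert.c '' {j | Ivl G i j ∧ f (.c j)} ∪ HVert.v '' {k | Nbr G i k ∧ f (.v k)} := by
    ext u
    cases u <;> simp [Hgraph, hrel, Ivl, Nbr, G.adj_comm, eq_comm] <;> tauto
  rw [hset]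
  exact ncard_union_images _ _ (fun _ _ h => by injection h)
    (fun _ _ h => by injection h) (fun _ _ h => by injection h) _ _

lemma infNbrs_v (i : Fin n) :
    infNbrs (Hgraph G) f (.v i)
      = {k | Nbr G i k ∧ f (.w k)}.ncard + {j | Ivl G i j ∧ f (.d j)}.ncard := by
  rw [infNbrs]
  have hset : {u | (Hgraph G).Adj (.v i) u ∧ f u}
      = HVert.w '' {k | Nbr G i k ∧ f (.w k)} ∪ HVert.d '' {j | Ivl G i j ∧ f (.d j)} := by
    ext u
    cases u <;> simp [Hgraph, hrel, Ivl, Nbr] <;> tauto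
  rw [hset]
  exact ncard_union_images _ _ (fun _ _ h => by injection h)
    (fun _ _ h => by injection h) (fun _ _ h => by injection h) _ _

lemma adjset_d (j : Fin (2*e)) :
    {u | (Hgraph G).Adj (.d j) u ∧ f u}
      = HVert.v '' {i | Ivl G i j ∧ f (.v i)} := by
  ext u
  cases u <;> simp [Hgraph, hrel, Ivl]

lemma infNbrs_d_iff (j : Fin (2*e)) :
    0 < infNbrs (Hgraph G) f (.d j) ↔ ∃ i, Ivl G i j ∧ f (.v i) := by
  rw [infNbrs, adjset_d]
  rw [Set.ncard_pos (Set.toFinite _)]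
  constructor
  · rintro ⟨u, i, hi, rfl⟩
    exact ⟨i, hi⟩
  · rintro ⟨i, hi⟩
    exact ⟨.v i, i, hi, rfl⟩

lemma adjset_c (j : Fin (2*e)) :
    {u | (Hgraph G).Adj (.c j) u ∧ f u}
      = {u : HVert n e | u = .g1 ∧ f .g1} ∪ {u : HVert n e | u = .g2 ∧ f .g2}
        ∪ HVert.w '' {i | Ivl G i j ∧ f (.w i)} := by
  ext u
  cases u <;> simp [Hgraph, hrel, Ivl] <;> tauto

end Dev3

section Dev4
open Classical
variable {n e : ℕ} (G : SimpleGraph (Fin n))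

lemma ncard_univ_fin (m : ℕ) : {i : Fin m | True}.ncard = m := by
  simp [Set.ncard_univ]

lemma psum_le_top (he : G.edgeSet.ncard = e) {i : ℕ} (h : i ≤ n) :
    psum G i ≤ 2 * e := by
  rw [← psum_top G he]
  exact psum_mono G h

lemma ncard_Ivl (he : G.edgeSet.ncard = e) (i : Fin n) :
    {j : Fin (2*e) | Ivl G i j}.ncard = vdeg G i := by
  have h1 : psum G (i.val + 1) ≤ 2 * e := psum_le_top G he i.isLt
  have h2 : psum G (i.val + 1) = psum G i.val + vdeg G i := by
    rw [psum_succ G i.isLt]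
  rw [show {j : Fin (2*e) | Ivl G i j}
      = {j : Fin (2*e) | psum G i.val ≤ j.val ∧ j.val < psum G (i.val+1)} from rfl,
    ncard_fin_interval h1]
  omega

lemma ncard_Nbr (i : Fin n) : {k | Nbr G i k}.ncard = vdeg G i + 1 := by
  have hset : {k | Nbr G i k} = insert i {k | G.Adj i k} := by
    ext k
    simp [Nbr, eq_comm, or_comm]
  rw [hset, Set.ncard_insert_of_notMem (by simp) (Set.toFinite _)]
  rfl

lemma exists_Ivl (he : G.edgeSet.ncard = e) (j : Fin (2*e)) :
    ∃ i : Fin n, Ivl G i j := by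
  have hj : (j : ℕ) < psum G n := by rw [psum_top G he]; exact j.isLt
  obtain ⟨i, hin, h1, h2⟩ := exists_interval G hj
  exact ⟨⟨i, hin⟩, h1, h2⟩

lemma Ivl_unique {i i' : Fin n} {j : Fin (2*e)} (h : Ivl G i j) (h' : Ivl G i' j) :
    i = i' := by
  exact Fin.ext (interval_unique G h.1 h.2 h'.1 h'.2)

lemma ncard_Ivl_vert (he : G.edgeSet.ncard = e) (j : Fin (2*e)) :
    {i : Fin n | Ivl G i j}.ncard = 1 := by
  obtain ⟨i0, hi0⟩ := exists_Ivl G he j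
  rw [Set.ncard_eq_one]
  refine ⟨i0, ?_⟩
  ext i
  simp only [Set.mem_setOf_eq, Set.mem_singleton_iff]
  exact ⟨fun h => Ivl_unique G h hi0, fun h => h ▸ hi0⟩

lemma vdeg_inf (x : HVert n e) :
    vdeg (Hgraph G) x = infNbrs (Hgraph G) (fun _ => True) x := by
  rw [vdeg, infNbrs]
  simp

lemma vdeg_a (i : Fin (2*e+1)) : vdeg (Hgraph G) (.a i) = 1 := by
  rw [vdeg_inf, infNbrs, adjset_a]
  simp

lemma vdeg_b (i : Fin (2*e+1)) : vdeg (Hgraph G) (.b i) = 1 := by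
  rw [vdeg_inf, infNbrs, adjset_b]
  simp

lemma vdeg_g1 : vdeg (Hgraph G) (.g1 : HVert n e) = 4 * e + 1 := by
  rw [vdeg_inf, infNbrs_g1, ncard_univ_fin, ncard_univ_fin]
  ring

lemma vdeg_g2 : vdeg (Hgraph G) (.g2 : HVert n e) = 4 * e + 1 := by
  rw [vdeg_inf, infNbrs_g2, ncard_univ_fin, ncard_univ_fin]
  ring

lemma vdeg_w (he : G.edgeSet.ncard = e) (i : Fin n) :
    vdeg (Hgraph G) (.w i : HVert n e) = 2 * vdeg G i + 1 := by
  rw [vdeg_inf, infNbrs_w]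
  simp only [and_true]
  rw [ncard_Ivl G he, ncard_Nbr G]
  ring

lemma vdeg_v (he : G.edgeSet.ncard = e) (i : Fin n) :
    vdeg (Hgraph G) (.v i : HVert n e) = 2 * vdeg G i + 1 := by
  rw [vdeg_inf, infNbrs_v]
  simp only [and_true]
  rw [ncard_Ivl G he, ncard_Nbr G]
  ring

lemma vdeg_d (he : G.edgeSet.ncard = e) (j : Fin (2*e)) :
    vdeg (Hgraph G) (.d j) = 1 := by
  rw [vdeg_inf, infNbrs, adjset_d]
  rw [Set.ncard_image_of_injective _ (fun _ _ h => by injection h)]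
  simpa using ncard_Ivl_vert G he j

lemma vdeg_c (he : G.edgeSet.ncard = e) (j : Fin (2*e)) :
    vdeg (Hgraph G) (.c j) = 3 := by
  rw [vdeg_inf, infNbrs, adjset_c]
  simp only [and_true]
  have h1 : ({u : HVert n e | u = .g1} ∪ {u : HVert n e | u = .g2}
      ∪ (HVert.w '' {i | Ivl G i j} : Set (HVert n e))).ncard
      = ({u : HVert n e | u = .g1} ∪ {u : HVert n e | u = .g2}).ncard
        + ((HVert.w '' {i | Ivl G i j} : Set (HVert n e))).ncard := by
    apply Set.ncard_union_eq ?_ (Set.toFinite _) (Set.toFinite _)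
    rw [Set.disjoint_left]
    rintro x (hx | hx) ⟨i, _, rfl⟩ <;> simp_all
  rw [h1]
  have h2 : ({u : HVert n e | u = .g1} ∪ {u : HVert n e | u = .g2}).ncard = 2 := by
    rw [show {u : HVert n e | u = .g1} ∪ {u : HVert n e | u = .g2}
        = {HVert.g1, HVert.g2} from by ext u; simp [Set.mem_insert_iff]; tauto]
    rw [Set.ncard_pair (by simp)]
  rw [h2, Set.ncard_image_of_injective _ (fun _ _ h => by injection h),
    ncard_Ivl_vert G he j]

lemma vthr_a (i : Fin (2*e+1)) : vthr (Hgraph G) (.a i) = 1 := by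
  rw [vthr, vdeg_a]
lemma vthr_b (i : Fin (2*e+1)) : vthr (Hgraph G) (.b i) = 1 := by
  rw [vthr, vdeg_b]
lemma vthr_g1 : vthr (Hgraph G) (.g1 : HVert n e) = 2 * e + 1 := by
  rw [vthr, vdeg_g1]; omega
lemma vthr_g2 : vthr (Hgraph G) (.g2 : HVert n e) = 2 * e + 1 := by
  rw [vthr, vdeg_g2]; omega
lemma vthr_c (he : G.edgeSet.ncard = e) (j : Fin (2*e)) :
    vthr (Hgraph G) (.c j) = 2 := by
  rw [vthr, vdeg_c G he]
lemma vthr_w (he : G.edgeSet.ncard = e) (i : Fin n) :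
    vthr (Hgraph G) (.w i : HVert n e) = vdeg G i + 1 := by
  rw [vthr, vdeg_w G he]; omega
lemma vthr_v (he : G.edgeSet.ncard = e) (i : Fin n) :
    vthr (Hgraph G) (.v i : HVert n e) = vdeg G i + 1 := by
  rw [vthr, vdeg_v G he]; omega
lemma vthr_d (he : G.edgeSet.ncard = e) (j : Fin (2*e)) :
    vthr (Hgraph G) (.d j) = 1 := by
  rw [vthr, vdeg_d G he]

end Dev4

section Dev5
open Classical
variable {n e : ℕ} (G : SimpleGraph (Fin n))

lemma stateAt_zero {V : Type*} (K : SimpleGraph V) (f0 : V → Prop) :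
    stateAt K f0 0 = f0 := rfl

lemma stateAt_succ {V : Type*} (K : SimpleGraph V) (f0 : V → Prop) (t : ℕ) (v : V) :
    stateAt K f0 (t+1) v ↔ vthr K v ≤ infNbrs K (stateAt K f0 t) v := Iff.rfl

lemma ncard_le_fin {m : ℕ} (P : Fin m → Prop) : {j | P j}.ncard ≤ m := by
  have := Set.ncard_le_ncard (Set.subset_univ {j | P j}) (Set.toFinite _)
  simpa [Set.ncard_univ] using this

variable (f : HVert n e → Prop)

/-- threshold step for `a i`. -/
lemma next_a (i : Fin (2*e+1)) :
    (vthr (Hgraph G) (.a i) ≤ infNbrs (Hgraph G) f (.a i)) ↔ f .g1 := by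
  rw [vthr_a]
  exact infNbrs_a_iff G f i

lemma next_b (i : Fin (2*e+1)) :
    (vthr (Hgraph G) (.b i) ≤ infNbrs (Hgraph G) f (.b i)) ↔ f .g2 := by
  rw [vthr_b]
  exact infNbrs_b_iff G f i

lemma next_g1 :
    (vthr (Hgraph G) (.g1 : HVert n e) ≤ infNbrs (Hgraph G) f .g1)
      ↔ 2*e+1 ≤ {i | f (.a i)}.ncard + {j | f (.c j)}.ncard := by
  rw [vthr_g1, infNbrs_g1]

lemma next_g2 :
    (vthr (Hgraph G) (.g2 : HVert n e) ≤ infNbrs (Hgraph G) f .g2)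
      ↔ 2*e+1 ≤ {i | f (.b i)}.ncard + {j | f (.c j)}.ncard := by
  rw [vthr_g2, infNbrs_g2]

lemma next_c (he : G.edgeSet.ncard = e) (j : Fin (2*e)) (h1 : f .g1) (h2 : f .g2) :
    vthr (Hgraph G) (.c j) ≤ infNbrs (Hgraph G) f (.c j) := by
  rw [vthr_c G he, infNbrs]
  have hsub : {HVert.g1, HVert.g2} ⊆ {u | (Hgraph G).Adj (.c j) u ∧ f u} := by
    rintro x (rfl | rfl)
    · exact ⟨Or.inr (by trivial), h1⟩
    · exact ⟨Or.inr (by trivial), h2⟩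
  calc 2 = ({HVert.g1, HVert.g2} : Set (HVert n e)).ncard := (Set.ncard_pair (by simp)).symm
    _ ≤ _ := Set.ncard_le_ncard hsub (Set.toFinite _)

lemma next_w (he : G.edgeSet.ncard = e) (i : Fin n) :
    (vthr (Hgraph G) (.w i : HVert n e) ≤ infNbrs (Hgraph G) f (.w i))
      ↔ vdeg G i + 1 ≤ {j | Ivl G i j ∧ f (.c j)}.ncard + {k | Nbr G i k ∧ f (.v k)}.ncard := by
  rw [vthr_w G he, infNbrs_w]

lemma next_v (he : G.edgeSet.ncard = e) (i : Fin n) :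
    (vthr (Hgraph G) (.v i : HVert n e) ≤ infNbrs (Hgraph G) f (.v i))
      ↔ vdeg G i + 1 ≤ {k | Nbr G i k ∧ f (.w k)}.ncard + {j | Ivl G i j ∧ f (.d j)}.ncard := by
  rw [vthr_v G he, infNbrs_v]

lemma next_d (he : G.edgeSet.ncard = e) (j : Fin (2*e)) :
    (vthr (Hgraph G) (.d j) ≤ infNbrs (Hgraph G) f (.d j))
      ↔ ∃ i, Ivl G i j ∧ f (.v i) := by
  rw [vthr_d G he]
  exact infNbrs_d_iff G f j

/-- from `next g1`, some `a` vertex is on. -/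
lemma next_g1_a (h : vthr (Hgraph G) (.g1 : HVert n e) ≤ infNbrs (Hgraph G) f .g1) :
    ∃ i, f (.a i) := by
  rw [next_g1] at h
  have hc := ncard_le_fin (fun j => f (.c j))
  have : 1 ≤ {i | f (.a i)}.ncard := by omega
  obtain ⟨i, hi⟩ := (Set.ncard_pos (Set.toFinite _)).mp this
  exact ⟨i, hi⟩

lemma next_g2_b (h : vthr (Hgraph G) (.g2 : HVert n e) ≤ infNbrs (Hgraph G) f .g2) :
    ∃ i, f (.b i) := by
  rw [next_g2] at h
  have hc := ncard_le_fin (fun j => f (.c j))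
  have : 1 ≤ {i | f (.b i)}.ncard := by omega
  obtain ⟨i, hi⟩ := (Set.ncard_pos (Set.toFinite _)).mp this
  exact ⟨i, hi⟩

/-- from `next (w i)`, some `v` neighbour is on. -/
lemma next_w_v (he : G.edgeSet.ncard = e) (i : Fin n)
    (h : vthr (Hgraph G) (.w i : HVert n e) ≤ infNbrs (Hgraph G) f (.w i)) :
    ∃ k, Nbr G i k ∧ f (.v k) := by
  rw [next_w G f he] at h
  have hc : {j | Ivl G i j ∧ f (.c j)}.ncard ≤ vdeg G i := by
    rw [← ncard_Ivl G he i]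
    exact Set.ncard_le_ncard (fun j hj => hj.1) (Set.toFinite _)
  obtain ⟨k, hk⟩ := (Set.ncard_pos (Set.toFinite _)).mp (show 0 < {k | Nbr G i k ∧ f (.v k)}.ncard by omega)
  exact ⟨k, hk⟩

/-- from `next (v i)`, either a private `d` is on, or all `w` neighbours are on. -/
lemma next_v_split (he : G.edgeSet.ncard = e) (i : Fin n)
    (h : vthr (Hgraph G) (.v i : HVert n e) ≤ infNbrs (Hgraph G) f (.v i)) :
    (∃ j, Ivl G i j ∧ f (.d j)) ∨ (∀ k, Nbr G i k → f (.w k)) := by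
  rw [next_v G f he] at h
  by_cases hd : ∃ j, Ivl G i j ∧ f (.d j)
  · exact Or.inl hd
  · right
    have hz : {j | Ivl G i j ∧ f (.d j)}.ncard = 0 := by
      rw [Set.ncard_eq_zero (Set.toFinite _)]
      ext j
      simp only [Set.mem_setOf_eq, Set.mem_empty_iff_false, iff_false]
      exact fun hj => hd ⟨j, hj⟩
    have hsub : {k | Nbr G i k ∧ f (.w k)} ⊆ {k | Nbr G i k} := fun k hk => hk.1
    have hge : {k | Nbr G i k}.ncard ≤ {k | Nbr G i k ∧ f (.w k)}.ncard := by
      rw [ncard_Nbr G i]; omega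
    have := Set.eq_of_subset_of_ncard_le hsub hge (Set.toFinite _)
    intro k hk
    have : k ∈ {k | Nbr G i k ∧ f (.w k)} := this.symm ▸ hk
    exact this.2

end Dev5

section Dev6
open Classical
variable {n e : ℕ} (G : SimpleGraph (Fin n)) (f0 : HVert n e → Prop)

lemma g1_back (t : ℕ) (h : stateAt (Hgraph G) f0 (t+2) .g1) :
    stateAt (Hgraph G) f0 t .g1 := by
  rw [stateAt_succ] at h
  obtain ⟨i, hi⟩ := next_g1_a G _ h
  rw [stateAt_succ] at hi
  exact (next_a G _ i).mp hi

lemma g2_back (t : ℕ) (h : stateAt (Hgraph G) f0 (t+2) .g2) :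
    stateAt (Hgraph G) f0 t .g2 := by
  rw [stateAt_succ] at h
  obtain ⟨i, hi⟩ := next_g2_b G _ h
  rw [stateAt_succ] at hi
  exact (next_b G _ i).mp hi

lemma phi_step (he : G.edgeSet.ncard = e) (t : ℕ) (i : Fin n)
    (h : stateAt (Hgraph G) f0 (t+2) (.v i)) :
    stateAt (Hgraph G) f0 t (.v i)
      ∨ ∀ k, Nbr G i k → ∃ m, Nbr G k m ∧ stateAt (Hgraph G) f0 t (.v m) := by
  rw [stateAt_succ] at h
  rcases next_v_split G _ he i h with ⟨j, hij, hdj⟩ | hw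
  · left
    rw [stateAt_succ] at hdj
    obtain ⟨i', hi', hvi'⟩ := (next_d G _ he j).mp hdj
    rwa [Ivl_unique G hij hi'] 
  · right
    intro k hk
    have := hw k hk
    rw [stateAt_succ] at this
    exact next_w_v G _ he k this

/-- domination of `G` by on-`v`-vertices propagates two steps backwards. -/
lemma dom_back (he : G.edgeSet.ncard = e) (t : ℕ)
    (h : ∀ k, ∃ m, Nbr G k m ∧ stateAt (Hgraph G) f0 (t+2) (.v m)) :
    ∀ k, ∃ m, Nbr G k m ∧ stateAt (Hgraph G) f0 t (.v m) := by
  intro k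
  obtain ⟨m, hkm, hm⟩ := h k
  rcases phi_step G f0 he t m hm with hv | hall
  · exact ⟨m, hkm, hv⟩
  · exact hall k ((nbr_comm G).mp hkm)

lemma descend2 (P : ℕ → Prop) (h : ∀ t, P (t+2) → P t) :
    ∀ k t, P (t + 2*k) → P t := by
  intro k
  induction k with
  | zero => intro t ht; simpa using ht
  | succ k ih =>
    intro t ht
    apply h
    apply ih (t+2)
    have : t + 2 + 2 * k = t + 2 * (k+1) := by ring
    rwa [this]

lemma descend01 (P : ℕ → Prop) (h2 : ∀ t, P (t+2) → P t) (σ : ℕ)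
    (h0 : P σ) (h1 : P (σ+1)) : P 0 ∧ P 1 := by
  rcases Nat.even_or_odd σ with ⟨k, hk⟩ | ⟨k, hk⟩
  · constructor
    · exact descend2 P h2 k 0 (by rw [show 0 + 2*k = σ by omega]; exact h0)
    · exact descend2 P h2 k 1 (by rw [show 1 + 2*k = σ + 1 by omega]; exact h1)
  · constructor
    · exact descend2 P h2 (k+1) 0 (by rw [show 0 + 2*(k+1) = σ + 1 by omega]; exact h1)
    · exact descend2 P h2 k 1 (by rw [show 1 + 2*k = σ by omega]; exact h0)

/-- the all-ones state is a fixed point. -/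
lemma fixed_step (he : G.edgeSet.ncard = e) (t : ℕ)
    (h : ∀ x, stateAt (Hgraph G) f0 t x) : ∀ x, stateAt (Hgraph G) f0 (t+1) x := by
  have hpos : ∀ x : HVert n e, 1 ≤ vdeg (Hgraph G) x := by
    intro x
    cases x with
    | g1 => rw [vdeg_g1]; omega
    | g2 => rw [vdeg_g2]; omega
    | a i => rw [vdeg_a]
    | b i => rw [vdeg_b]
    | c j => rw [vdeg_c G he]; omega
    | w i => rw [vdeg_w G he]; omega
    | v i => rw [vdeg_v G he]; omega
    | d j => rw [vdeg_d G he]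
  intro x
  rw [stateAt_succ]
  have heq : infNbrs (Hgraph G) (stateAt (Hgraph G) f0 t) x = vdeg (Hgraph G) x := by
    rw [infNbrs, vdeg]
    congr 1
    ext u
    simp only [Set.mem_setOf_eq, and_iff_left_iff_imp]
    exact fun _ => h u
  rw [heq, vthr]
  have := hpos x
  omega

/-- the counting lemma: if `V₁` dominates `G` and each `i ∈ V₁` has `deg i + 1`
resources among `T ∩ N[i]` and `r i` private ones, total cost is at least `n`. -/
lemma lemL (V₁ T : Finset (Fin n)) (r : Fin n → ℕ)
    (hdom : ∀ k, ∃ i ∈ V₁, Nbr G k i)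
    (hcov : ∀ i ∈ V₁, vdeg G i + 1 ≤ (T.filter (fun k => Nbr G i k)).card + r i) :
    n ≤ T.card + ∑ i ∈ V₁, r i := by
  classical
  set c : Fin n → ℕ := fun k => (V₁.filter (fun i => Nbr G k i)).card with hc
  have h1 : ∀ k, 1 ≤ c k := by
    intro k
    obtain ⟨i, hi, hn⟩ := hdom k
    exact Finset.card_pos.mpr ⟨i, Finset.mem_filter.mpr ⟨hi, hn⟩⟩
  have hdc : ∀ s : Finset (Fin n),
      ∑ i ∈ V₁, (s.filter (fun k => Nbr G i k)).card = ∑ k ∈ s, c k := by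
    intro s
    simp only [hc, Finset.card_filter]
    rw [Finset.sum_comm]
    apply Finset.sum_congr rfl
    intro k _
    apply Finset.sum_congr rfl
    intro i _
    exact if_congr (nbr_comm G) rfl rfl
  have h2 : ∀ i, vdeg G i + 1 = (Finset.univ.filter (fun k => Nbr G i k)).card := by
    intro i
    have hsplit : (Finset.univ.filter (fun k => Nbr G i k))
        = (Finset.univ.filter (fun k => G.Adj i k)) ∪ {i} := by
      ext k
      simp only [Finset.mem_filter, Finset.mem_univ, true_and, Finset.mem_union, Finset.mem_singleton, Nbr, eq_comm (a := i)]
    rw [hsplit, Finset.card_union_of_disjoint (by simp)]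
    have : vdeg G i = (Finset.univ.filter (fun k => G.Adj i k)).card := by
      rw [vdeg, ncard_setOf]
    simp [← this]
  have hsum : ∑ k ∈ Finset.univ, c k ≤ (∑ k ∈ T, c k) + ∑ i ∈ V₁, r i := by
    calc ∑ k ∈ Finset.univ, c k = ∑ i ∈ V₁, (vdeg G i + 1) := by
          rw [← hdc Finset.univ]
          exact Finset.sum_congr rfl fun i _ => (h2 i).symm
      _ ≤ ∑ i ∈ V₁, ((T.filter (fun k => Nbr G i k)).card + r i) := Finset.sum_le_sum hcov
      _ = (∑ k ∈ T, c k) + ∑ i ∈ V₁, r i := by rw [Finset.sum_add_distrib, hdc T]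
  have hsdiff : (∑ k ∈ Finset.univ \ T, c k) + ∑ k ∈ T, c k = ∑ k ∈ Finset.univ, c k :=
    Finset.sum_sdiff (Finset.subset_univ T)
  have hlow : (Finset.univ \ T).card ≤ ∑ k ∈ Finset.univ \ T, c k := by
    calc (Finset.univ \ T).card = ∑ _k ∈ Finset.univ \ T, 1 := by simp
      _ ≤ _ := Finset.sum_le_sum (fun k _ => h1 k)
  have hcard : (Finset.univ \ T).card = n - T.card := by
    rw [Finset.card_sdiff_of_subset (Finset.subset_univ T)]
    simp
  have hTn : T.card ≤ n := by
    have := Finset.card_le_univ T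
    simpa using this
  omega

end Dev6

section Dev7
open Classical
variable {n e : ℕ}

/-- decomposition of the cost by vertex classes. -/
lemma ncard_parts (f : HVert n e → Prop) :
    {x | f x}.ncard
      = {u : HVert n e | u = .g1 ∧ f .g1}.ncard + {u : HVert n e | u = .g2 ∧ f .g2}.ncard
        + {i | f (.a i)}.ncard + {i | f (.b i)}.ncard + {j | f (.c j)}.ncard
        + {i | f (.w i)}.ncard + {i | f (.v i)}.ncard + {j | f (.d j)}.ncard := by
  have hsplit : {x | f x}
      = {u : HVert n e | u = .g1 ∧ f .g1} ∪ ({u : HVert n e | u = .g2 ∧ f .g2}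
        ∪ ((HVert.a '' {i | f (.a i)}) ∪ ((HVert.b '' {i | f (.b i)})
        ∪ ((HVert.c '' {j | f (.c j)}) ∪ ((HVert.w '' {i | f (.w i)})
        ∪ ((HVert.v '' {i | f (.v i)}) ∪ (HVert.d '' {j | f (.d j)}))))))) := by
    ext x
    cases x <;> simp
  rw [hsplit]
  rw [Set.ncard_union_eq (by rw [Set.disjoint_left]; rintro x ⟨rfl, -⟩; simp)
      (Set.toFinite _) (Set.toFinite _),
    Set.ncard_union_eq (by rw [Set.disjoint_left]; rintro x ⟨rfl, -⟩; simp)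
      (Set.toFinite _) (Set.toFinite _),
    Set.ncard_union_eq (by rw [Set.disjoint_left]; rintro x ⟨i, -, rfl⟩; simp)
      (Set.toFinite _) (Set.toFinite _),
    Set.ncard_union_eq (by rw [Set.disjoint_left]; rintro x ⟨i, -, rfl⟩; simp)
      (Set.toFinite _) (Set.toFinite _),
    Set.ncard_union_eq (by rw [Set.disjoint_left]; rintro x ⟨i, -, rfl⟩; simp)
      (Set.toFinite _) (Set.toFinite _),
    Set.ncard_union_eq (by rw [Set.disjoint_left]; rintro x ⟨i, -, rfl⟩; simp)
      (Set.toFinite _) (Set.toFinite _),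
    Set.ncard_union_eq (by rw [Set.disjoint_left]; rintro x ⟨i, -, rfl⟩; simp)
      (Set.toFinite _) (Set.toFinite _)]
  rw [Set.ncard_image_of_injective _ (fun _ _ h => by injection h),
    Set.ncard_image_of_injective _ (fun _ _ h => by injection h),
    Set.ncard_image_of_injective _ (fun _ _ h => by injection h),
    Set.ncard_image_of_injective _ (fun _ _ h => by injection h),
    Set.ncard_image_of_injective _ (fun _ _ h => by injection h),
    Set.ncard_image_of_injective _ (fun _ _ h => by injection h)]
  ring

end Dev7

section Dev8
open Classical
variable {n e : ℕ}

lemma upper_bound (G : SimpleGraph (Fin n)) (he : G.edgeSet.ncard = e)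
    (D : Set (Fin n)) (hD : ∀ v, v ∉ D → ∃ u ∈ D, G.Adj u v) :
    ∃ f0 : HVert n e → Prop, IsPTS (Hgraph G) f0
      ∧ ptsCost f0 = 2*e + n + 4 + D.ncard := by
  set f0 : HVert n e → Prop := fun x => match x with
    | .g1 => True
    | .g2 => True
    | .a i => i.val = 0
    | .b i => i.val = 0
    | .c _ => True
    | .w _ => True
    | .v i => i ∈ D
    | .d _ => False with hf0
  have hag1 : f0 .g1 := trivial
  have hag2 : f0 .g2 := trivial
  have hsetA : {i : Fin (2*e+1) | f0 (.a i)} = {i | i.val = 0} := rfl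
  have hsetB : {i : Fin (2*e+1) | f0 (.b i)} = {i | i.val = 0} := rfl
  have hsetC : {j : Fin (2*e) | f0 (.c j)} = {j | True} := rfl
  have hsetW : {i : Fin n | f0 (.w i)} = {i | True} := rfl
  have hsetV : {i : Fin n | f0 (.v i)} = D := by ext i; simp [hf0]
  have hsetD : {j : Fin (2*e) | f0 (.d j)} = (∅ : Set (Fin (2*e))) := by
    ext j; simp [hf0]
  have hone : {i : Fin (2*e+1) | i.val = 0}.ncard = 1 := by
    rw [show {i : Fin (2*e+1) | i.val = 0} = {⟨0, by omega⟩} from by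
      ext i; rw [Set.mem_setOf_eq, Set.mem_singleton_iff, Fin.ext_iff]]
    exact Set.ncard_singleton _
  -- domination gives an on-neighbour for every vertex
  have hdomNbr : ∀ i : Fin n, ∃ k, Nbr G i k ∧ k ∈ D := by
    intro i
    by_cases hi : i ∈ D
    · exact ⟨i, nbr_refl G i, hi⟩
    · obtain ⟨u, hu, hadj⟩ := hD i hi
      exact ⟨u, Or.inl (G.adj_symm hadj), hu⟩
  -- time 1 facts
  have hS1g1 : stateAt (Hgraph G) f0 1 .g1 := by
    rw [stateAt_succ, stateAt_zero]
    rw [next_g1]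
    rw [hsetA, hsetC, hone, ncard_univ_fin]
    omega
  have hS1g2 : stateAt (Hgraph G) f0 1 .g2 := by
    rw [stateAt_succ, stateAt_zero]
    rw [next_g2]
    rw [hsetB, hsetC, hone, ncard_univ_fin]
    omega
  have hS1a : ∀ i, stateAt (Hgraph G) f0 1 (.a i) := by
    intro i
    rw [stateAt_succ, stateAt_zero]
    exact (next_a G f0 i).mpr hag1
  have hS1b : ∀ i, stateAt (Hgraph G) f0 1 (.b i) := by
    intro i
    rw [stateAt_succ, stateAt_zero]
    exact (next_b G f0 i).mpr hag2
  have hS1c : ∀ j, stateAt (Hgraph G) f0 1 (.c j) := by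
    intro j
    rw [stateAt_succ, stateAt_zero]
    exact next_c G f0 he j hag1 hag2
  have hS1w : ∀ i, stateAt (Hgraph G) f0 1 (.w i) := by
    intro i
    rw [stateAt_succ, stateAt_zero]
    rw [next_w G f0 he i]
    have hcpart : {j | Ivl G i j ∧ f0 (.c j)} = {j | Ivl G i j} := by
      ext j; simp [hf0]
    have hvpart : 1 ≤ {k | Nbr G i k ∧ f0 (.v k)}.ncard := by
      obtain ⟨k, hk1, hk2⟩ := hdomNbr i
      exact (Set.ncard_pos (Set.toFinite _)).mpr ⟨k, hk1, hk2⟩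
    rw [hcpart, ncard_Ivl G he]
    omega
  have hS1v : ∀ i, stateAt (Hgraph G) f0 1 (.v i) := by
    intro i
    rw [stateAt_succ, stateAt_zero]
    rw [next_v G f0 he i]
    have hwpart : {k | Nbr G i k ∧ f0 (.w k)} = {k | Nbr G i k} := by
      ext k; simp [hf0]
    rw [hwpart, ncard_Nbr G]
    omega
  -- time 2: everything
  have hS2 : ∀ x, stateAt (Hgraph G) f0 2 x := by
    intro x
    rw [show (2:ℕ) = 1 + 1 from rfl, stateAt_succ]
    cases x with
    | g1 =>
      rw [next_g1]
      have : {i : Fin (2*e+1) | stateAt (Hgraph G) f0 1 (.a i)} = {i | True} := by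
        ext i; simp [hS1a]
      rw [this, ncard_univ_fin]
      omega
    | g2 =>
      rw [next_g2]
      have : {i : Fin (2*e+1) | stateAt (Hgraph G) f0 1 (.b i)} = {i | True} := by
        ext i; simp [hS1b]
      rw [this, ncard_univ_fin]
      omega
    | a i => exact (next_a G _ i).mpr hS1g1
    | b i => exact (next_b G _ i).mpr hS1g2
    | c j => exact next_c G _ he j hS1g1 hS1g2
    | w i =>
      rw [next_w G _ he i]
      have h1 : {j | Ivl G i j ∧ stateAt (Hgraph G) f0 1 (.c j)} = {j | Ivl G i j} := by
        ext j; simp [hS1c]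
      have h2 : {k | Nbr G i k ∧ stateAt (Hgraph G) f0 1 (.v k)} = {k | Nbr G i k} := by
        ext k; simp [hS1v]
      rw [h1, h2, ncard_Ivl G he, ncard_Nbr G]
      omega
    | v i =>
      rw [next_v G _ he i]
      have h1 : {k | Nbr G i k ∧ stateAt (Hgraph G) f0 1 (.w k)} = {k | Nbr G i k} := by
        ext k; simp [hS1w]
      rw [h1, ncard_Nbr G]
      omega
    | d j =>
      rw [next_d G _ he j]
      obtain ⟨i, hi⟩ := exists_Ivl G he j
      exact ⟨i, hi, hS1v i⟩
  refine ⟨f0, ⟨2, hS2⟩, ?_⟩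
  rw [ptsCost, ncard_parts]
  have e1 : {u : HVert n e | u = .g1 ∧ f0 .g1} = {HVert.g1} := by
    ext u; simp [hag1]
  have e2 : {u : HVert n e | u = .g2 ∧ f0 .g2} = {HVert.g2} := by
    ext u; simp [hag2]
  rw [e1, e2, hsetA, hsetB, hsetC, hsetW, hsetV, hsetD, hone,
    Set.ncard_singleton, Set.ncard_singleton, ncard_univ_fin, ncard_univ_fin,
    Set.ncard_empty]
  ring

end Dev8

section Dev9
open Classical
variable {n e : ℕ}

lemma lower_bound (G : SimpleGraph (Fin n)) (hmin : ∀ v : Fin n, 1 ≤ vdeg G v)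
    (he : G.edgeSet.ncard = e) (f0 : HVert n e → Prop)
    (hPTS : IsPTS (Hgraph (n := n) (e := e) G) f0) :
    2*e + n + 4 + domNum G ≤ ptsCost f0 := by
  obtain ⟨τ0, hτ0⟩ := hPTS
  obtain ⟨σ, hall⟩ : ∃ σ, ∀ x, stateAt (Hgraph G) f0 (σ+1) x := by
    cases τ0 with
    | zero => exact ⟨0, fixed_step G f0 he 0 hτ0⟩
    | succ σ => exact ⟨σ, hτ0⟩
  -- seeds at times σ and σ+1
  have hg1σ : stateAt (Hgraph G) f0 σ .g1 := by
    have h := hall (.a ⟨0, by omega⟩)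
    rw [stateAt_succ] at h
    exact (next_a G _ _).mp h
  have hg2σ : stateAt (Hgraph G) f0 σ .g2 := by
    have h := hall (.b ⟨0, by omega⟩)
    rw [stateAt_succ] at h
    exact (next_b G _ _).mp h
  have hg1 := descend01 (fun t => stateAt (Hgraph G) f0 t .g1)
    (g1_back G f0) σ hg1σ (hall .g1)
  have hg2 := descend01 (fun t => stateAt (Hgraph G) f0 t .g2)
    (g2_back G f0) σ hg2σ (hall .g2)
  have hDomσ : ∀ k, ∃ m, Nbr G k m ∧ stateAt (Hgraph G) f0 σ (.v m) := by
    intro k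
    have hd : psum G (k.val+1) ≤ 2*e := psum_le_top G he k.isLt
    have hdk : psum G k.val < psum G (k.val+1) := by
      rw [psum_succ G k.isLt]
      have h1 := hmin k
      have h2 : (⟨k.val, k.isLt⟩ : Fin n) = k := rfl
      rw [h2]
      omega
    have hjlt : psum G k.val < 2*e := by omega
    have h := hall (.d ⟨psum G k.val, hjlt⟩)
    rw [stateAt_succ] at h
    obtain ⟨i, hIvl, hv⟩ := (next_d G _ he ⟨psum G k.val, hjlt⟩).mp h
    have hIk : Ivl G k ⟨psum G k.val, hjlt⟩ := ⟨le_refl _, hdk⟩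
    exact ⟨k, nbr_refl G k, by rwa [Ivl_unique G hIvl hIk] at hv⟩
  have hDomτ : ∀ k, ∃ m, Nbr G k m ∧ stateAt (Hgraph G) f0 (σ+1) (.v m) :=
    fun k => ⟨k, nbr_refl G k, hall _⟩
  have hDom := descend01 (fun t => ∀ k, ∃ m, Nbr G k m ∧ stateAt (Hgraph G) f0 t (.v m))
    (dom_back G f0 he) σ hDomσ hDomτ
  -- time-0 quantities
  have hg1_0 : f0 .g1 := hg1.1
  have hg2_0 : f0 .g2 := hg2.1
  have hA : 2*e+1 ≤ {i | f0 (.a i)}.ncard + {j | f0 (.c j)}.ncard := by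
    have h : stateAt (Hgraph G) f0 1 .g1 := hg1.2
    rw [stateAt_succ, stateAt_zero] at h
    exact (next_g1 G f0).mp h
  have hB : 2*e+1 ≤ {i | f0 (.b i)}.ncard + {j | f0 (.c j)}.ncard := by
    have h : stateAt (Hgraph G) f0 1 .g2 := hg2.2
    rw [stateAt_succ, stateAt_zero] at h
    exact (next_g2 G f0).mp h
  have hC : {j | f0 (.c j)}.ncard ≤ 2*e := ncard_le_fin _
  have hγ : domNum G ≤ {i | f0 (.v i)}.ncard := by
    apply Nat.sInf_le
    refine ⟨{i | f0 (.v i)}, ?_, rfl⟩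
    intro v hv
    obtain ⟨m, hm, hfm⟩ := hDom.1 v
    rcases hm with hadj | rfl
    · exact ⟨m, hfm, G.adj_symm hadj⟩
    · exact absurd hfm hv
  have hWD : n ≤ {k | f0 (.w k)}.ncard + {j | f0 (.d j)}.ncard := by
    classical
    set V₁ : Finset (Fin n) := Finset.univ.filter
      (fun i => stateAt (Hgraph G) f0 1 (.v i)) with hV₁
    set T : Finset (Fin n) := Finset.univ.filter (fun k => f0 (.w k)) with hT
    set r : Fin n → ℕ := fun i =>
      (Finset.univ.filter (fun j => Ivl G i j ∧ f0 (.d j))).card with hrdef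
    have hdom : ∀ k, ∃ i ∈ V₁, Nbr G k i := by
      intro k
      obtain ⟨m, hm, hs⟩ := hDom.2 k
      exact ⟨m, Finset.mem_filter.mpr ⟨Finset.mem_univ m, hs⟩, hm⟩
    have hcov : ∀ i ∈ V₁, vdeg G i + 1 ≤ (T.filter (fun k => Nbr G i k)).card + r i := by
      intro i hi
      have hSi := (Finset.mem_filter.mp hi).2
      rw [stateAt_succ, stateAt_zero, next_v G f0 he i] at hSi
      have h1 : {k | Nbr G i k ∧ f0 (.w k)}.ncard = (T.filter (fun k => Nbr G i k)).card := by
        rw [ncard_setOf]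
        congr 1
        ext k
        simp only [Finset.mem_filter, Finset.mem_univ, true_and, hT]
        tauto
      have h2 : {j | Ivl G i j ∧ f0 (.d j)}.ncard = r i := by
        simp only [hrdef]
        rw [ncard_setOf]
        congr 1
        exact Finset.filter_congr_decidable _ _ _
      omega
    have hmain := lemL G V₁ T r hdom hcov
    have hTc : T.card = {k | f0 (.w k)}.ncard := by rw [ncard_setOf, hT]
    have hrs : ∑ i ∈ V₁, r i ≤ {j | f0 (.d j)}.ncard := by
      have h1 : ∑ i ∈ V₁, r i ≤ ∑ i ∈ Finset.univ, r i :=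
        Finset.sum_le_sum_of_subset (Finset.subset_univ V₁)
      have h2 : ∑ i ∈ Finset.univ, r i
          = (Finset.univ.biUnion (fun i => Finset.univ.filter
              (fun j => Ivl G i j ∧ f0 (.d j)))).card := by
        rw [Finset.card_biUnion]
        intro i _ i' _ hne
        rw [Function.onFun, Finset.disjoint_left]
        intro j hj hj'
        simp only [Finset.mem_filter] at hj hj'
        exact hne (Ivl_unique G hj.2.1 hj'.2.1)
      have h3 : (Finset.univ.biUnion (fun i => Finset.univ.filter
            (fun j => Ivl G i j ∧ f0 (.d j))))
          ⊆ Finset.univ.filter (fun j => f0 (.d j)) := by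
        intro j hj
        simp only [Finset.mem_biUnion, Finset.mem_filter, Finset.mem_univ, true_and] at hj ⊢
        obtain ⟨i, hi⟩ := hj
        exact hi.2
      have h4 := Finset.card_le_card h3
      rw [ncard_setOf]
      omega
    omega
  -- assemble
  rw [ptsCost, ncard_parts]
  have p1 : {u : HVert n e | u = .g1 ∧ f0 .g1}.ncard = 1 := by
    rw [show {u : HVert n e | u = .g1 ∧ f0 .g1} = {HVert.g1} from by ext u; simp [hg1_0]]
    exact Set.ncard_singleton _
  have p2 : {u : HVert n e | u = .g2 ∧ f0 .g2}.ncard = 1 := by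
    rw [show {u : HVert n e | u = .g2 ∧ f0 .g2} = {HVert.g2} from by ext u; simp [hg2_0]]
    exact Set.ncard_singleton _
  omega

end Dev9

/-- For a finite simple graph `G` with `n` vertices, `e` edges and
minimum degree at least `1`, the gadget graph `H` satisfies
`NPPTS(H) = 2e + n + 4 + γ(G)` under the strict majority threshold. -/
theorem stmt_12 {n e : ℕ} (G : SimpleGraph (Fin n))
    (hmin : ∀ v : Fin n, 1 ≤ vdeg G v) (he : G.edgeSet.ncard = e) :
    NPPTS (Hgraph (n := n) (e := e) G) = 2 * e + n + 4 + domNum G := by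
  classical
  have hγmem : ∃ D : Set (Fin n), (∀ v, v ∉ D → ∃ u ∈ D, G.Adj u v) ∧ D.ncard = domNum G := by
    have hne : {k | ∃ D : Set (Fin n), (∀ v, v ∉ D → ∃ u ∈ D, G.Adj u v) ∧ D.ncard = k}.Nonempty :=
      ⟨n, Set.univ, fun v hv => absurd (Set.mem_univ v) hv, by simp [Set.ncard_univ]⟩
    exact Nat.sInf_mem hne
  obtain ⟨D, hD, hDcard⟩ := hγmem
  obtain ⟨f0, hf0PTS, hf0cost⟩ := upper_bound G he D hD
  have hmem : (2*e + n + 4 + domNum G)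
      ∈ {c | ∃ g0 : HVert n e → Prop, IsPTS (Hgraph G) g0 ∧ ptsCost g0 = c} :=
    ⟨f0, hf0PTS, by rw [hf0cost, hDcard]⟩
  rw [NPPTS]
  apply le_antisymm
  · exact Nat.sInf_le hmem
  · apply le_csInf ⟨_, hmem⟩
    rintro c ⟨f1, hPTS, rfl⟩
    exact lower_bound G hmin he f1 hPTS
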